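/- Let K be a q-edge-colored ordered complete graph on N vertices. Then there exists a q-edge-colored ordered complete graph K̃ on N^q vertices such that ℓ_i(K̃) = Π(K) for every color i ∈ {1,…,q}. -/

import Mathlib

namespace Stmt13

/-- mixed-radix weight -/
def Wt (n : ℕ → ℕ) (k : ℕ) : ℕ := ∏ j ∈ Finset.range k, n j

lemma Wt_succ (n : ℕ → ℕ) (k : ℕ) : Wt n (k + 1) = Wt n k * n k := by
  simp [Wt, Finset.prod_range_succ]

lemma sum_lt_Wt (n c : ℕ → ℕ) (m : ℕ) (h : ∀ k < m, c k < n k) :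
    ∑ k ∈ Finset.range m, c k * Wt n k < Wt n m := by
  induction m with
  | zero => simp [Wt]
  | succ m ih =>
    rw [Finset.sum_range_succ, Wt_succ]
    have h1 : ∑ k ∈ Finset.range m, c k * Wt n k < Wt n m :=
      ih fun k hk => h k (by omega)
    have h2 : c m + 1 ≤ n m := h m (by omega)
    calc ∑ k ∈ Finset.range m, c k * Wt n k + c m * Wt n m
        < Wt n m + c m * Wt n m := by omega
      _ = (c m + 1) * Wt n m := by ring
      _ ≤ n m * Wt n m := Nat.mul_le_mul_right _ h2
      _ = Wt n m * n m := Nat.mul_comm _ _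

lemma key_lt (n c d : ℕ → ℕ) (m k0 : ℕ) (hk0 : k0 < m)
    (hc : ∀ k < k0, c k < n k) (hlt : c k0 < d k0)
    (hhi : ∀ k, k0 < k → k < m → c k = d k) :
    ∑ k ∈ Finset.range m, c k * Wt n k < ∑ k ∈ Finset.range m, d k * Wt n k := by
  have hsplit : ∀ e : ℕ → ℕ, ∑ k ∈ Finset.range m, e k * Wt n k =
      ∑ k ∈ Finset.range (k0+1), e k * Wt n k + ∑ k ∈ Finset.Ico (k0+1) m, e k * Wt n k := by
    intro e
    rw [Finset.range_eq_Ico, ← Finset.sum_Ico_consecutive _ (by omega : 0 ≤ k0+1) (by omega : k0+1 ≤ m), ← Finset.range_eq_Ico]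
  rw [hsplit c, hsplit d]
  have hhieq : ∑ k ∈ Finset.Ico (k0+1) m, c k * Wt n k = ∑ k ∈ Finset.Ico (k0+1) m, d k * Wt n k := by
    apply Finset.sum_congr rfl
    intro k hk
    rw [Finset.mem_Ico] at hk
    rw [hhi k (by omega) hk.2]
  have hlow : ∑ k ∈ Finset.range (k0+1), c k * Wt n k < ∑ k ∈ Finset.range (k0+1), d k * Wt n k := by
    rw [Finset.sum_range_succ, Finset.sum_range_succ]
    have h1 : ∑ k ∈ Finset.range k0, c k * Wt n k < Wt n k0 := sum_lt_Wt n c k0 hc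
    have h2 : (c k0 + 1) * Wt n k0 ≤ d k0 * Wt n k0 := Nat.mul_le_mul_right _ (by omega)
    have h3 : ∑ k ∈ Finset.range k0, d k * Wt n k ≥ 0 := Nat.zero_le _
    nlinarith [Nat.zero_le (∑ k ∈ Finset.range k0, d k * Wt n k)]
  omega

lemma sum_max_Wt (n : ℕ → ℕ) (m : ℕ) (h : ∀ k < m, 0 < n k) :
    ∑ k ∈ Finset.range m, (n k - 1) * Wt n k = Wt n m - 1 := by
  induction m with
  | zero => simp [Wt]
  | succ m ih =>
    rw [Finset.sum_range_succ, Wt_succ, ih (fun k hk => h k (by omega))]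
    have h1 : 0 < n m := h m (by omega)
    have h2 : 0 < Wt n m := by
      have : ∀ j < m, 0 < n j := fun j hj => h j (by omega)
      unfold Wt
      exact Finset.prod_pos fun j hj => this j (Finset.mem_range.mp hj)
    have : (n m - 1) * Wt n m = n m * Wt n m - Wt n m := by
      rw [Nat.sub_mul, Nat.one_mul]
    rw [this, Nat.mul_comm]
    have h3 : Wt n m ≤ Wt n m * n m := Nat.le_mul_of_pos_right _ h1
    omega



def pathSet (q M : ℕ) (ψ : Fin M → Fin M → Fin q) (i : Fin q) : Set ℕ :=
  {ℓ : ℕ | ∃ v : Fin ℓ → Fin M, StrictMono v ∧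
    ∀ a b : Fin ℓ, (a : ℕ) + 1 = (b : ℕ) → ψ (v a) (v b) ≠ i}

lemma le_of_mem_pathSet {q M : ℕ} {ψ : Fin M → Fin M → Fin q} {i : Fin q} {ℓ : ℕ}
    (h : ℓ ∈ pathSet q M ψ i) : ℓ ≤ M := by
  obtain ⟨v, hv, -⟩ := h
  simpa using Fintype.card_le_of_injective v hv.injective

lemma zero_mem_pathSet (q M : ℕ) (ψ : Fin M → Fin M → Fin q) (i : Fin q) :
    0 ∈ pathSet q M ψ i :=
  ⟨Fin.elim0, fun a => a.elim0, fun a => a.elim0⟩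

lemma bddAbove_pathSet (q M : ℕ) (ψ : Fin M → Fin M → Fin q) (i : Fin q) :
    BddAbove (pathSet q M ψ i) :=
  ⟨M, fun _ h => le_of_mem_pathSet h⟩

-- elli is sSup of pathSet by definition; we restate membership facts
lemma sSup_pathSet_mem (q M : ℕ) (ψ : Fin M → Fin M → Fin q) (i : Fin q) :
    sSup (pathSet q M ψ i) ∈ pathSet q M ψ i :=
  Nat.sSup_mem ⟨0, zero_mem_pathSet q M ψ i⟩ (bddAbove_pathSet q M ψ i)

lemma le_sSup_pathSet {q M : ℕ} {ψ : Fin M → Fin M → Fin q} {i : Fin q} {ℓ : ℕ}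
    (h : ℓ ∈ pathSet q M ψ i) : ℓ ≤ sSup (pathSet q M ψ i) :=
  le_csSup (bddAbove_pathSet q M ψ i) h

/-- extend a monotone path avoiding relation `C` by one vertex at the end. -/
lemma snoc_path {M : ℕ} (C : Fin M → Fin M → Prop) (m : ℕ)
    (u : Fin (m + 1) → Fin M) (hu : StrictMono u)
    (hedge : ∀ a b : Fin (m + 1), (a : ℕ) + 1 = (b : ℕ) → C (u a) (u b))
    (z : Fin M) (hz : u (Fin.last m) < z) (hcz : C (u (Fin.last m)) z) :
    ∃ u' : Fin (m + 2) → Fin M, StrictMono u' ∧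
      (∀ a b : Fin (m + 2), (a : ℕ) + 1 = (b : ℕ) → C (u' a) (u' b)) ∧
      u' (Fin.last (m + 1)) = z := by
  refine ⟨fun a => if h : (a : ℕ) < m + 1 then u ⟨a, h⟩ else z, ?_, ?_, ?_⟩
  · intro a b hab
    by_cases hb : (b : ℕ) < m + 1
    · have ha : (a : ℕ) < m + 1 := by have := Fin.lt_def.mp hab; omega
      simp only [dif_pos ha, dif_pos hb]
      exact hu (Fin.mk_lt_mk.mpr (Fin.lt_def.mp hab))
    · have ha : (a : ℕ) < m + 1 := by
        have h1 := a.isLt; have h2 := b.isLt; have := Fin.lt_def.mp hab; omega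
      simp only [dif_pos ha, dif_neg hb]
      calc u ⟨a, ha⟩ ≤ u (Fin.last m) := hu.monotone (Fin.le_last _)
        _ < z := hz
  · intro a b hab
    by_cases hb : (b : ℕ) < m + 1
    · have ha : (a : ℕ) < m + 1 := by omega
      simp only [dif_pos ha, dif_pos hb]
      exact hedge ⟨a, ha⟩ ⟨b, hb⟩ (by simpa using hab)
    · have hb' : (b : ℕ) = m + 1 := by have := b.isLt; omega
      have ha : (a : ℕ) < m + 1 := by omega
      have ha' : (⟨a, ha⟩ : Fin (m+1)) = Fin.last m := by
        simp [Fin.ext_iff]; omega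
      simp only [dif_pos ha, dif_neg hb, ha']
      exact hcz
  · simp



lemma Wt_const (N k : ℕ) : Wt (fun _ => N) k = N ^ k := by
  simp [Wt]

lemma key_lt_fin {m N : ℕ} (a b : Fin m → Fin N) (k0 : Fin m)
    (hlt : (a k0 : ℕ) < (b k0 : ℕ)) (hhi : ∀ k, k0 < k → a k = b k) :
    ∑ k : Fin m, (a k : ℕ) * N ^ (k : ℕ) < ∑ k : Fin m, (b k : ℕ) * N ^ (k : ℕ) := by
  set c : ℕ → ℕ := fun k => if h : k < m then ((a ⟨k, h⟩ : ℕ)) else 0 with hcdef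
  set d : ℕ → ℕ := fun k => if h : k < m then ((b ⟨k, h⟩ : ℕ)) else 0 with hddef
  have ha : ∑ k : Fin m, (a k : ℕ) * N ^ (k : ℕ) = ∑ k ∈ Finset.range m, c k * Wt (fun _ => N) k := by
    rw [← Fin.sum_univ_eq_sum_range (fun k => c k * Wt (fun _ => N) k) m]
    apply Finset.sum_congr rfl
    intro k _
    simp [hcdef, k.isLt, Wt_const]
  have hb : ∑ k : Fin m, (b k : ℕ) * N ^ (k : ℕ) = ∑ k ∈ Finset.range m, d k * Wt (fun _ => N) k := by
    rw [← Fin.sum_univ_eq_sum_range (fun k => d k * Wt (fun _ => N) k) m]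
    apply Finset.sum_congr rfl
    intro k _
    simp [hddef, k.isLt, Wt_const]
  rw [ha, hb]
  apply key_lt _ _ _ m (k0 : ℕ) k0.isLt
  · intro k hk
    have hkm : k < m := lt_trans hk k0.isLt
    simp only [hcdef, dif_pos hkm]
    exact (a ⟨k, hkm⟩).isLt
  · simpa [hcdef, hddef, k0.isLt, Fin.eta] using hlt
  · intro k hk hkm
    simp only [hcdef, hddef, dif_pos hkm]
    exact congrArg Fin.val (hhi ⟨k, hkm⟩ (by simpa [Fin.lt_def] using hk))

variable {q N : ℕ}

noncomputable def dig (x : Fin (N ^ (q + 1))) : Fin (q + 1) → Fin N :=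
  finFunctionFinEquiv.symm x

lemma val_eq_sum (x : Fin (N ^ (q + 1))) :
    (x : ℕ) = ∑ k : Fin (q + 1), (dig x k : ℕ) * N ^ (k : ℕ) := by
  conv_lhs => rw [← Equiv.apply_symm_apply finFunctionFinEquiv x]
  exact finFunctionFinEquiv_apply _

lemma dig_injective : Function.Injective (dig (q := q) (N := N)) :=
  finFunctionFinEquiv.symm.injective

/-- encode comparison: if digits agree above k0 and are smaller at k0, the number is smaller -/
lemma lt_of_dig {x y : Fin (N ^ (q + 1))} (k0 : Fin (q + 1))
    (hlt : (dig x k0 : ℕ) < (dig y k0 : ℕ)) (hhi : ∀ k, k0 < k → dig x k = dig y k) :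
    x < y := by
  rw [Fin.lt_def, val_eq_sum x, val_eq_sum y]
  exact key_lt_fin _ _ k0 hlt hhi

noncomputable def lev (x y : Fin (N ^ (q + 1))) : Fin (q + 1) :=
  if h : dig x = dig y then 0
  else (Finset.univ.filter fun k => dig x k ≠ dig y k).max' (by
    obtain ⟨k, hk⟩ := Function.ne_iff.mp h
    exact ⟨k, Finset.mem_filter.mpr ⟨Finset.mem_univ _, hk⟩⟩)

lemma lev_ne {x y : Fin (N ^ (q + 1))} (h : x ≠ y) : dig x (lev x y) ≠ dig y (lev x y) := by
  have hd : dig x ≠ dig y := fun he => h (dig_injective he)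
  rw [lev, dif_neg hd]
  have := Finset.max'_mem (Finset.univ.filter fun k => dig x k ≠ dig y k)
    (by obtain ⟨k, hk⟩ := Function.ne_iff.mp hd
        exact ⟨k, Finset.mem_filter.mpr ⟨Finset.mem_univ _, hk⟩⟩)
  exact (Finset.mem_filter.mp this).2

lemma lev_hi {x y : Fin (N ^ (q + 1))} (h : x ≠ y) {k : Fin (q + 1)} (hk : lev x y < k) :
    dig x k = dig y k := by
  have hd : dig x ≠ dig y := fun he => h (dig_injective he)
  by_contra hne
  have hmem : k ∈ Finset.univ.filter fun k => dig x k ≠ dig y k :=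
    Finset.mem_filter.mpr ⟨Finset.mem_univ _, hne⟩
  have := Finset.le_max' _ k hmem
  rw [lev, dif_neg hd] at hk
  exact absurd this (not_le.mpr hk)

lemma dig_lev_lt {x y : Fin (N ^ (q + 1))} (hxy : x < y) :
    (dig x (lev x y) : ℕ) < (dig y (lev x y) : ℕ) := by
  have hne : x ≠ y := ne_of_lt hxy
  rcases lt_trichotomy ((dig x (lev x y) : ℕ)) ((dig y (lev x y) : ℕ)) with h | h | h
  · exact h
  · exact absurd (Fin.ext h) (lev_ne hne)
  · exact absurd (lt_of_dig (lev x y) h fun k hk => (lev_hi hne hk).symm)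
      (not_lt.mpr (le_of_lt hxy))

lemma lev_comm (x y : Fin (N ^ (q + 1))) : lev x y = lev y x := by
  unfold lev
  by_cases h : dig x = dig y
  · rw [dif_pos h, dif_pos h.symm]
  · rw [dif_neg h, dif_neg (Ne.symm h)]
    congr 1
    ext k
    simp [ne_comm]



variable {q : ℕ} {P : Fin (q + 1) → ℕ}

/-- ℕ-valued radices -/
def nr (P : Fin (q + 1) → ℕ) : ℕ → ℕ := fun k => if h : k < q + 1 then P ⟨k, h⟩ else 1

lemma nr_fin (k : Fin (q + 1)) : nr P (k : ℕ) = P k := by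
  simp [nr, k.isLt]

/-- transfer the `finPiFinEquiv` value formula into `Wt` form -/
lemma pi_val_eq (f : ∀ k : Fin (q + 1), Fin (P k)) :
    ((finPiFinEquiv f : Fin (∏ k, P k)) : ℕ) =
      ∑ k ∈ Finset.range (q + 1), (fun j => if h : j < q + 1 then ((f ⟨j, h⟩ : ℕ)) else 0) k
        * Wt (nr P) k := by
  rw [finPiFinEquiv_apply]
  rw [← Fin.sum_univ_eq_sum_range
    (fun j => (fun j => if h : j < q + 1 then ((f ⟨j, h⟩ : ℕ)) else 0) j * Wt (nr P) j) (q + 1)]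
  apply Finset.sum_congr rfl
  intro k _
  simp only [k.isLt, dif_pos, Fin.eta]
  congr 1
  rw [Wt, ← Fin.prod_univ_eq_prod_range (fun j => nr P j) (k : ℕ)]
  apply Finset.prod_congr rfl
  intro j _
  have hj : (j : ℕ) < q + 1 := lt_trans j.isLt k.isLt
  simp [nr, hj, Fin.castLE]

lemma prod_eq_Wt : (∏ k : Fin (q + 1), P k) = Wt (nr P) (q + 1) := by
  rw [Wt, ← Fin.prod_univ_eq_prod_range (fun j => nr P j) (q + 1)]
  exact Finset.prod_congr rfl fun k _ => (nr_fin k).symm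

/-- mixed radix comparison through the equiv -/
lemma pi_lt_of (f g : ∀ k : Fin (q + 1), Fin (P k)) (k0 : Fin (q + 1))
    (hlt : (f k0 : ℕ) < (g k0 : ℕ)) (hhi : ∀ k, k0 < k → (f k : ℕ) = (g k : ℕ)) :
    finPiFinEquiv f < finPiFinEquiv g := by
  rw [Fin.lt_def, pi_val_eq, pi_val_eq]
  apply key_lt _ _ _ (q + 1) (k0 : ℕ) k0.isLt
  · intro k hk
    have hkm : k < q + 1 := lt_trans hk k0.isLt
    simp only [dif_pos hkm]
    have := (f ⟨k, hkm⟩).isLt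
    rw [nr]
    simp [hkm]
  · simpa [k0.isLt, Fin.eta] using hlt
  · intro k hk hkm
    simp only [dif_pos hkm]
    exact hhi ⟨k, hkm⟩ (by simpa [Fin.lt_def] using hk)

/-- the successor tuple -/
lemma pi_succ (f : ∀ k : Fin (q + 1), Fin (P k)) (k0 : Fin (q + 1))
    (hmin : ∀ k, k < k0 → (f k : ℕ) + 1 = P k)
    (hk0 : (f k0 : ℕ) + 1 < P k0)
    (g : ∀ k : Fin (q + 1), Fin (P k))
    (hg0 : ∀ k, k < k0 → (g k : ℕ) = 0)
    (hgk0 : (g k0 : ℕ) = (f k0 : ℕ) + 1)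
    (hghi : ∀ k, k0 < k → g k = f k) :
    ((finPiFinEquiv g : Fin (∏ k, P k)) : ℕ) = ((finPiFinEquiv f : Fin (∏ k, P k)) : ℕ) + 1 := by
  rw [pi_val_eq, pi_val_eq]
  set c : ℕ → ℕ := fun j => if h : j < q + 1 then ((f ⟨j, h⟩ : ℕ)) else 0 with hc
  set d : ℕ → ℕ := fun j => if h : j < q + 1 then ((g ⟨j, h⟩ : ℕ)) else 0 with hd
  have hsplit : ∀ e : ℕ → ℕ, ∑ k ∈ Finset.range (q + 1), e k * Wt (nr P) k =
      (∑ k ∈ Finset.range (k0 : ℕ), e k * Wt (nr P) k) + e (k0 : ℕ) * Wt (nr P) (k0 : ℕ)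
        + ∑ k ∈ Finset.Ico ((k0 : ℕ) + 1) (q + 1), e k * Wt (nr P) k := by
    intro e
    have h1 : (0 : ℕ) ≤ (k0 : ℕ) + 1 := by omega
    have h2 : (k0 : ℕ) + 1 ≤ q + 1 := k0.isLt
    rw [Finset.range_eq_Ico, ← Finset.sum_Ico_consecutive _ h1 h2, ← Finset.range_eq_Ico,
      Finset.sum_range_succ]
  rw [hsplit c, hsplit d]
  -- the high parts agree
  have hhi_eq : ∑ k ∈ Finset.Ico ((k0 : ℕ) + 1) (q + 1), d k * Wt (nr P) k
      = ∑ k ∈ Finset.Ico ((k0 : ℕ) + 1) (q + 1), c k * Wt (nr P) k := by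
    apply Finset.sum_congr rfl
    intro k hk
    rw [Finset.mem_Ico] at hk
    simp only [hc, hd, dif_pos hk.2]
    rw [hghi ⟨k, hk.2⟩ (by simpa [Fin.lt_def] using hk.1)]
  -- low part of f is maximal
  have hcmax : ∑ k ∈ Finset.range (k0 : ℕ), c k * Wt (nr P) k = Wt (nr P) (k0 : ℕ) - 1 := by
    rw [← sum_max_Wt (nr P) (k0 : ℕ) ?pos]
    case pos =>
      intro k hk
      have hkm : k < q + 1 := lt_trans hk k0.isLt
      have := hmin ⟨k, hkm⟩ (by simpa [Fin.lt_def] using hk)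
      rw [nr]
      simp only [dif_pos hkm]
      omega
    apply Finset.sum_congr rfl
    intro k hk
    rw [Finset.mem_range] at hk
    have hkm : k < q + 1 := lt_trans hk k0.isLt
    have h1 := hmin ⟨k, hkm⟩ (by simpa [Fin.lt_def] using hk)
    simp only [hc, dif_pos hkm, nr]
    congr 1
    omega
  have hdlow : ∑ k ∈ Finset.range (k0 : ℕ), d k * Wt (nr P) k = 0 := by
    apply Finset.sum_eq_zero
    intro k hk
    rw [Finset.mem_range] at hk
    have hkm : k < q + 1 := lt_trans hk k0.isLt
    simp only [hd, dif_pos hkm]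
    rw [hg0 ⟨k, hkm⟩ (by simpa [Fin.lt_def] using hk)]
    ring
  have hck0 : c (k0 : ℕ) = (f k0 : ℕ) := by simp only [hc, dif_pos k0.isLt, Fin.eta]
  have hdk0 : d (k0 : ℕ) = (f k0 : ℕ) + 1 := by
    simp only [hd, dif_pos k0.isLt, Fin.eta]
    exact hgk0
  have hwpos : 0 < Wt (nr P) (k0 : ℕ) := by
    rw [Wt]
    apply Finset.prod_pos
    intro k hk
    rw [Finset.mem_range] at hk
    have hkm : k < q + 1 := lt_trans hk k0.isLt
    have := hmin ⟨k, hkm⟩ (by simpa [Fin.lt_def] using hk)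
    rw [nr]
    simp only [dif_pos hkm]
    omega
  rw [hhi_eq, hcmax, hdlow, hck0, hdk0]
  have : ((f k0 : ℕ) + 1) * Wt (nr P) (k0 : ℕ) = (f k0 : ℕ) * Wt (nr P) (k0 : ℕ) + Wt (nr P) (k0 : ℕ) := by ring
  omega


lemma dig_apply {q N : ℕ} (h : Fin (q + 1) → Fin N) :
    dig (finFunctionFinEquiv h) = h := Equiv.symm_apply_apply _ _

lemma lev_eq_of {q N : ℕ} {x y : Fin (N ^ (q + 1))} (k0 : Fin (q + 1))
    (hne : dig x k0 ≠ dig y k0) (hhi : ∀ k, k0 < k → dig x k = dig y k) :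
    lev x y = k0 := by
  have hd : dig x ≠ dig y := Function.ne_iff.mpr ⟨k0, hne⟩
  rw [lev, dif_neg hd]
  apply le_antisymm
  · apply Finset.max'_le
    intro k hk
    rw [Finset.mem_filter] at hk
    by_contra hlt
    exact hk.2 (hhi k (not_le.mp hlt))
  · exact Finset.le_max' _ k0 (Finset.mem_filter.mpr ⟨Finset.mem_univ _, hne⟩)

noncomputable def chi' (q N : ℕ) (χ : Fin N → Fin N → Fin (q + 1)) :
    Fin (N ^ (q + 1)) → Fin (N ^ (q + 1)) → Fin (q + 1) :=
  fun x y => χ (dig x (lev x y)) (dig y (lev x y)) + lev x y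


/-- the block-counting function along the path -/
def Bfun (q L : ℕ) (lv : ℕ → Fin (q + 1)) : ℕ → Fin (q + 1) → ℕ
  | 0 => fun _ => 0
  | (t + 1) => fun k =>
      if t + 1 ≤ L then
        (if k = lv t then Bfun q L lv t k + 1
         else if lv t < k then Bfun q L lv t k else 0)
      else Bfun q L lv t k

lemma Bfun_zero (q L : ℕ) (lv : ℕ → Fin (q + 1)) (k : Fin (q + 1)) :
    Bfun q L lv 0 k = 0 := rfl

lemma Bfun_succ (q L : ℕ) (lv : ℕ → Fin (q + 1)) (t : ℕ) (k : Fin (q + 1)) :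
    Bfun q L lv (t + 1) k =
      if t + 1 ≤ L then
        (if k = lv t then Bfun q L lv t k + 1
         else if lv t < k then Bfun q L lv t k else 0)
      else Bfun q L lv t k := rfl

lemma Bfun_le (q L : ℕ) (lv : ℕ → Fin (q + 1)) : ∀ t k, Bfun q L lv t k ≤ t := by
  intro t
  induction t with
  | zero => intro k; exact Nat.le_of_eq rfl
  | succ t ih =>
    intro k
    have := ih k
    rw [Bfun_succ]
    split_ifs <;> omega

lemma upper (q N : ℕ) (χ : Fin N → Fin N → Fin (q + 1)) (i : Fin (q + 1)) (ℓ : ℕ)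
    (hmem : ℓ ∈ pathSet (q + 1) (N ^ (q + 1)) (chi' q N χ) i) :
    ℓ ≤ ∏ k : Fin (q + 1), sSup (pathSet (q + 1) N χ (i - k)) := by
  classical
  obtain ⟨v, hv, hedge⟩ := hmem
  rcases ℓ with _ | L
  · exact Nat.zero_le _
  set vv : ℕ → Fin (N ^ (q + 1)) := fun t => v ⟨min t L, by omega⟩ with hvvdef
  have hvve : ∀ t (h : t ≤ L), vv t = v ⟨t, by omega⟩ := by
    intro t h
    rw [hvvdef]
    congr 1
    exact Fin.ext (by simp [Nat.min_eq_left h])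
  set lv : ℕ → Fin (q + 1) := fun t => lev (vv t) (vv (t + 1)) with hlvdef
  set B := Bfun q L lv with hBdef
  -- facts about consecutive vertices
  have hxy : ∀ t, t + 1 ≤ L → vv t < vv (t + 1) := by
    intro t ht
    rw [hvve t (by omega), hvve (t + 1) ht]
    exact hv (Fin.mk_lt_mk.mpr (by omega))
  have hcol : ∀ t, t + 1 ≤ L →
      χ (dig (vv t) (lv t)) (dig (vv (t + 1)) (lv t)) ≠ i - lv t := by
    intro t ht
    have h1 : chi' q N χ (vv t) (vv (t + 1)) ≠ i := by
      rw [hvve t (by omega), hvve (t + 1) ht]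
      exact hedge ⟨t, by omega⟩ ⟨t + 1, by omega⟩ (by simp)
    have h3 : chi' q N χ (vv t) (vv (t + 1)) =
        χ (dig (vv t) (lv t)) (dig (vv (t + 1)) (lv t)) + lv t := rfl
    intro h2
    exact h1 (by rw [h3, h2, sub_add_cancel])
  -- the main invariant
  have inv : ∀ t, t ≤ L → ∀ k : Fin (q + 1),
      ∃ u : Fin (B t k + 1) → Fin N, StrictMono u ∧
        (∀ a b : Fin (B t k + 1), (a : ℕ) + 1 = (b : ℕ) → χ (u a) (u b) ≠ i - k) ∧
        u (Fin.last (B t k)) = dig (vv t) k := by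
    intro t
    induction t with
    | zero =>
      intro _ k
      have hB0 : B 0 k = 0 := rfl
      rw [hB0]
      refine ⟨fun _ => dig (vv 0) k, ?_, ?_, rfl⟩
      · intro a b hab
        exact absurd (Fin.lt_def.mp hab) (by have := a.isLt; have := b.isLt; omega)
      · intro a b hab
        have := a.isLt; have := b.isLt; omega
    | succ t ih =>
      intro ht k
      have htL : t ≤ L := by omega
      have hxyt := hxy t ht
      have hxynet : vv t ≠ vv (t + 1) := ne_of_lt hxyt
      rcases lt_trichotomy k (lv t) with hk | hk | hk
      · -- k below the level: restart with a singleton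
        have hB : B (t + 1) k = 0 := by
          rw [hBdef, Bfun_succ, if_pos ht, if_neg (ne_of_lt hk),
            if_neg (not_lt.mpr (le_of_lt hk))]
        rw [hB]
        refine ⟨fun _ => dig (vv (t + 1)) k, ?_, ?_, rfl⟩
        · intro a b hab
          exact absurd (Fin.lt_def.mp hab) (by have := a.isLt; have := b.isLt; omega)
        · intro a b hab
          have := a.isLt; have := b.isLt; omega
      · -- k = the level: extend the path
        have hB : B (t + 1) k = B t k + 1 := by
          rw [hBdef, Bfun_succ, if_pos ht, if_pos hk]
        obtain ⟨u, hu, hue, hul⟩ := ih htL k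
        rw [hB]
        have hdlt : dig (vv t) k < dig (vv (t + 1)) k := by
          rw [hk]; exact Fin.lt_def.mpr (dig_lev_lt hxyt)
        have hcz : χ (dig (vv t) k) (dig (vv (t + 1)) k) ≠ i - k := by
          rw [hk]; exact hcol t ht
        obtain ⟨u', hu', hue', hul'⟩ := snoc_path (fun a b => χ a b ≠ i - k) (B t k) u hu hue
          (dig (vv (t + 1)) k) (by rw [hul]; exact hdlt) (by rw [hul]; exact hcz)
        exact ⟨u', hu', hue', hul'⟩
      · -- k above the level: digits unchanged
        have hB : B (t + 1) k = B t k := by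
          rw [hBdef, Bfun_succ, if_pos ht, if_neg (ne_of_gt hk), if_pos hk]
        obtain ⟨u, hu, hue, hul⟩ := ih htL k
        rw [hB]
        exact ⟨u, hu, hue, by rw [hul]; exact lev_hi hxynet hk⟩
  -- the per-coordinate bound
  have hBP : ∀ t, t ≤ L → ∀ k : Fin (q + 1),
      B t k < sSup (pathSet (q + 1) N χ (i - k)) := by
    intro t ht k
    obtain ⟨u, hu, hue, -⟩ := inv t ht k
    have h1 : B t k + 1 ∈ pathSet (q + 1) N χ (i - k) := ⟨u, hu, hue⟩
    have h2 := le_sSup_pathSet h1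
    omega
  -- the potential function
  set c : ℕ → ℕ → ℕ := fun t j => if h : j < q + 1 then B t ⟨j, h⟩ else 0 with hcdef
  set G : ℕ → ℕ := fun t => ∑ j ∈ Finset.range (q + 1), c t j * Wt (fun _ => L + 1) j
    with hGdef
  have hstep : ∀ t, t + 1 ≤ L → G t < G (t + 1) := by
    intro t ht
    rw [hGdef]
    apply key_lt _ _ _ (q + 1) ((lv t : ℕ)) (lv t).isLt
    · intro j hj
      have hjq : j < q + 1 := lt_trans hj (lv t).isLt
      rw [hcdef]
      simp only [dif_pos hjq]
      have h1 := Bfun_le q L lv t ⟨j, hjq⟩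
      rw [← hBdef] at h1
      omega
    · rw [hcdef]
      simp only [dif_pos (lv t).isLt, Fin.eta]
      have h1 : B (t + 1) (lv t) = B t (lv t) + 1 := by
        rw [hBdef, Bfun_succ, if_pos ht, if_pos rfl]
      omega
    · intro j hj hjq
      rw [hcdef]
      simp only [dif_pos hjq]
      have hgt : lv t < (⟨j, hjq⟩ : Fin (q + 1)) := by
        rw [Fin.lt_def]; exact hj
      have h1 : B (t + 1) (⟨j, hjq⟩ : Fin (q + 1)) = B t ⟨j, hjq⟩ := by
        rw [hBdef, Bfun_succ, if_pos ht, if_neg (ne_of_gt hgt), if_pos hgt]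
      rw [h1]
  have hGmono : ∀ s', s' ≤ L → ∀ s, s < s' → G s < G s' := by
    intro s'
    induction s' with
    | zero => intro _ s hs; omega
    | succ n ih =>
      intro hL s hs
      rcases Nat.lt_succ_iff_lt_or_eq.mp hs with h2 | h2
      · exact lt_trans (ih (by omega) s h2) (hstep n hL)
      · subst h2; exact hstep s hL
  -- the injection
  set Φ : Fin (L + 1) → (∀ k : Fin (q + 1), Fin (sSup (pathSet (q + 1) N χ (i - k)))) :=
    fun t k => ⟨B (t : ℕ) k, hBP (t : ℕ) (by omega) k⟩ with hΦdef
  have hΦinj : Function.Injective Φ := by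
    intro t t' h
    have hBeq : ∀ k, B (t : ℕ) k = B (t' : ℕ) k := by
      intro k
      exact congrArg Fin.val (congrFun h k)
    have hGeq : G (t : ℕ) = G (t' : ℕ) := by
      rw [hGdef]
      apply Finset.sum_congr rfl
      intro j hj
      rw [Finset.mem_range] at hj
      rw [hcdef]
      simp only [dif_pos hj]
      rw [hBeq ⟨j, hj⟩]
    by_contra hne
    have hne' : (t : ℕ) ≠ (t' : ℕ) := fun h' => hne (Fin.ext h')
    rcases lt_or_gt_of_ne hne' with h' | h'
    · exact absurd hGeq (ne_of_lt (hGmono (t' : ℕ) (by omega) (t : ℕ) h'))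
    · exact absurd hGeq.symm (ne_of_lt (hGmono (t : ℕ) (by omega) (t' : ℕ) h'))
  have hcard := Fintype.card_le_of_injective Φ hΦinj
  rw [Fintype.card_fin, Fintype.card_pi] at hcard
  simpa using hcard


lemma lower (q N : ℕ) (χ : Fin N → Fin N → Fin (q + 1)) (i : Fin (q + 1)) :
    (∏ k : Fin (q + 1), sSup (pathSet (q + 1) N χ (i - k)))
      ∈ pathSet (q + 1) (N ^ (q + 1)) (chi' q N χ) i := by
  classical
  set P : Fin (q + 1) → ℕ := fun k => sSup (pathSet (q + 1) N χ (i - k)) with hPdef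
  choose u hu1 hu2 using fun k : Fin (q + 1) =>
    sSup_pathSet_mem (q + 1) N χ (i - k)
  -- u k : Fin (P k) → Fin N
  set F : Fin (∏ k, P k) → Fin (N ^ (q + 1)) :=
    fun t => finFunctionFinEquiv (fun k => u k (finPiFinEquiv.symm t k)) with hFdef
  refine ⟨F, ?_, ?_⟩
  · -- strict mono
    intro t t' htt
    set f := finPiFinEquiv.symm t with hf
    set g := finPiFinEquiv.symm t' with hg
    have hfg : f ≠ g := fun h => (ne_of_lt htt) (finPiFinEquiv.symm.injective h)
    set s : Finset (Fin (q + 1)) := Finset.univ.filter (fun k => f k ≠ g k) with hs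
    have hsne : s.Nonempty := by
      obtain ⟨k, hk⟩ := Function.ne_iff.mp hfg
      exact ⟨k, Finset.mem_filter.mpr ⟨Finset.mem_univ _, hk⟩⟩
    set k0 := s.max' hsne with hk0
    have hk0mem := Finset.max'_mem s hsne
    have hk0ne : f k0 ≠ g k0 := (Finset.mem_filter.mp hk0mem).2
    have hhi : ∀ k, k0 < k → f k = g k := by
      intro k hk
      by_contra hne
      exact absurd (Finset.le_max' s k (Finset.mem_filter.mpr ⟨Finset.mem_univ _, hne⟩))
        (not_le.mpr hk)
    have hlt : (f k0 : ℕ) < (g k0 : ℕ) := by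
      rcases lt_trichotomy ((f k0 : ℕ)) ((g k0 : ℕ)) with h | h | h
      · exact h
      · exact absurd (Fin.ext h) hk0ne
      · have := pi_lt_of g f k0 h (fun k hk => congrArg Fin.val (hhi k hk).symm)
        rw [Equiv.apply_symm_apply, Equiv.apply_symm_apply] at this
        exact absurd this (not_lt.mpr (le_of_lt htt))
    apply lt_of_dig k0
    · rw [hFdef]
      simp only [dig_apply]
      exact hu1 k0 (Fin.lt_def.mpr hlt)
    · intro k hk
      have hthis := hhi k hk
      rw [hf, hg] at hthis
      rw [hFdef]
      simp only [dig_apply]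
      rw [hthis]
  · -- edges avoid color i
    intro a b hab
    set f := finPiFinEquiv.symm a with hf
    -- some coordinate is incrementable
    have hTpos : ∀ k : Fin (q + 1), 0 < P k := fun k => (f k).pos
    have hne : (Finset.univ.filter (fun k : Fin (q + 1) => (f k : ℕ) + 1 < P k)).Nonempty := by
      by_contra hempty
      rw [Finset.not_nonempty_iff_eq_empty, Finset.filter_eq_empty_iff] at hempty
      have hmax : ∀ k : Fin (q + 1), (f k : ℕ) = P k - 1 := by
        intro k
        have h1 : (f k : ℕ) < P k := (f k).isLt
        have h2 := hempty (Finset.mem_univ k)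
        omega
      have hval : (a : ℕ) = (∏ k, P k) - 1 := by
        have h1 : ((finPiFinEquiv f : Fin (∏ k, P k)) : ℕ) = (a : ℕ) := by
          rw [hf, Equiv.apply_symm_apply]
        rw [← h1, pi_val_eq]
        have h2 : ∀ k ∈ Finset.range (q + 1),
            (fun j => if h : j < q + 1 then ((f ⟨j, h⟩ : ℕ)) else 0) k * Wt (nr P) k
              = (nr P k - 1) * Wt (nr P) k := by
          intro k hk
          rw [Finset.mem_range] at hk
          simp only [dif_pos hk]
          rw [hmax ⟨k, hk⟩, nr]
          simp [hk]
        rw [Finset.sum_congr rfl h2, sum_max_Wt, ← prod_eq_Wt]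
        intro k hk
        rw [nr]
        simp only [dif_pos hk]
        exact hTpos ⟨k, hk⟩
      have hb : (b : ℕ) < ∏ k, P k := b.isLt
      have hval' : (a : ℕ) = (∏ k, P k) - 1 := hval
      omega
    set k0 := (Finset.univ.filter (fun k : Fin (q + 1) => (f k : ℕ) + 1 < P k)).min' hne with hk0
    have hk0mem := Finset.min'_mem _ hne
    have hk0lt : (f k0 : ℕ) + 1 < P k0 := (Finset.mem_filter.mp hk0mem).2
    have hmin : ∀ k, k < k0 → (f k : ℕ) + 1 = P k := by
      intro k hk
      by_contra hne'
      have h1 : (f k : ℕ) < P k := (f k).isLt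
      have h2 : (f k : ℕ) + 1 < P k := by omega
      exact absurd (Finset.min'_le _ k (Finset.mem_filter.mpr ⟨Finset.mem_univ _, h2⟩))
        (not_le.mpr hk)
    set g : ∀ k : Fin (q + 1), Fin (P k) := fun k =>
      if hk : k = k0 then ⟨(f k0 : ℕ) + 1, by rw [hk]; exact hk0lt⟩
      else if k < k0 then ⟨0, hTpos k⟩ else f k with hgdef
    have hg0 : ∀ k, k < k0 → (g k : ℕ) = 0 := by
      intro k hk
      simp only [hgdef, dif_neg (ne_of_lt hk), if_pos hk]
    have hgk0 : (g k0 : ℕ) = (f k0 : ℕ) + 1 := by simp [hgdef]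
    have hghi : ∀ k, k0 < k → g k = f k := by
      intro k hk
      simp only [hgdef, dif_neg (ne_of_gt hk), if_neg (not_lt.mpr (le_of_lt hk))]
    have hsucc : ((finPiFinEquiv g : Fin (∏ k, P k)) : ℕ) = (b : ℕ) := by
      rw [pi_succ f k0 hmin hk0lt g hg0 hgk0 hghi, hf, Equiv.apply_symm_apply, hab]
    have hgb : finPiFinEquiv.symm b = g := by
      apply finPiFinEquiv.injective
      rw [Equiv.apply_symm_apply]
      exact (Fin.ext hsucc).symm
    -- now compute the color
    have hdiga : dig (F a) = fun k => u k (f k) := by rw [hFdef]; exact dig_apply _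
    have hdigb : dig (F b) = fun k => u k (g k) := by
      rw [hFdef, ← hgb]
      exact dig_apply _
    have hlev : lev (F a) (F b) = k0 := by
      apply lev_eq_of
      · rw [hdiga, hdigb]
        intro h
        have := (hu1 k0).injective h
        rw [← this] at hgk0
        omega
      · intro k hk
        rw [hdiga, hdigb]
        show u k (f k) = u k (g k)
        rw [hghi k hk]
    intro hcol
    rw [chi', hlev, hdiga, hdigb] at hcol
    have hedge : χ (u k0 (f k0)) (u k0 (g k0)) ≠ i - k0 :=
      hu2 k0 (f k0) (g k0) hgk0.symm
    apply hedge
    rw [eq_sub_iff_add_eq]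
    exact hcol

end Stmt13

/-- `elli q N χ i` : the maximum length (number of vertices) of a monotone path in the
`q`-edge-colored ordered complete graph on `[N]` given by `χ`, none of whose edges has
color `i`. -/
noncomputable def elli (q N : ℕ) (χ : Fin N → Fin N → Fin q) (i : Fin q) : ℕ :=
  sSup {ℓ : ℕ | ∃ v : Fin ℓ → Fin N, StrictMono v ∧
    ∀ a b : Fin ℓ, (a : ℕ) + 1 = (b : ℕ) → χ (v a) (v b) ≠ i}

/-- Let `K` be a `q`-edge-colored ordered complete graph on `N` vertices. Then there is a
`q`-edge-colored ordered complete graph `K̃` on `N^q` vertices with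
`ℓ_i(K̃) = Π(K) = ∏_j ℓ_j(K)` for every color `i`. -/
theorem stmt_13 (q N : ℕ) (hq : 1 ≤ q) (χ : Fin N → Fin N → Fin q) :
    ∃ χ' : Fin (N ^ q) → Fin (N ^ q) → Fin q,
      ∀ i : Fin q, elli q (N ^ q) χ' i = ∏ j : Fin q, elli q N χ j := by
  obtain ⟨q', rfl⟩ : ∃ q', q = q' + 1 := ⟨q - 1, by omega⟩
  refine ⟨Stmt13.chi' q' N χ, fun i => ?_⟩
  have helli : ∀ (M : ℕ) (ψ : Fin M → Fin M → Fin (q' + 1)) (j : Fin (q' + 1)),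
      elli (q' + 1) M ψ j = sSup (Stmt13.pathSet (q' + 1) M ψ j) := fun _ _ _ => rfl
  have hprod : (∏ k : Fin (q' + 1), sSup (Stmt13.pathSet (q' + 1) N χ (i - k)))
      = ∏ j : Fin (q' + 1), elli (q' + 1) N χ j := by
    rw [show (∏ j : Fin (q' + 1), elli (q' + 1) N χ j)
        = ∏ j : Fin (q' + 1), sSup (Stmt13.pathSet (q' + 1) N χ j) from
      Finset.prod_congr rfl fun j _ => helli N χ j]
    exact Equiv.prod_comp (Equiv.subLeft i) fun j => sSup (Stmt13.pathSet (q' + 1) N χ j)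
  rw [helli, ← hprod]
  apply le_antisymm
  · apply csSup_le ⟨0, Stmt13.zero_mem_pathSet _ _ _ _⟩
    intro ℓ hℓ
    exact Stmt13.upper q' N χ i ℓ hℓ
  · exact Stmt13.le_sSup_pathSet (Stmt13.lower q' N χ i)
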